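/- arXiv:1809.03117 — 3 statements merged into one kernel-verified Lean document; each statement's English description precedes it below -/
import Mathlib

section
/- Let M, K ≥ 1 be integers, β_1,…,β_K > 0 and p_1,…,p_K ≥ 0. Let G be a random M×K complex matrix whose MK entries are independent, with entry (m,n) distributed CN(0,β_n). Let P = diag(p_1,…,p_K) and let diag(A) denote the diagonal matrix retaining only the diagonal entries of a square matrix A. Then for every n ∈ {1,…,K}, with g_n the n-th column of G, E[ g_n^H · diag(G P G^H) · g_n ] = M β_n ( ∑_{i=1}^K p_i β_i + p_n β_n ). -/
open MeasureTheory ProbabilityTheory Matrix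

/-- The circularly symmetric complex Gaussian distribution `CN(0, β)` on `ℂ`:
the law of `x + i·y` where `x, y` are independent real Gaussians with mean `0`
and variance `β/2`. -/
noncomputable def complexGaussian (β : ℝ) : Measure ℂ :=
  ((gaussianReal 0 (β / 2).toNNReal).prod (gaussianReal 0 (β / 2).toNNReal)).map
    (fun p : ℝ × ℝ => (p.1 : ℂ) + Complex.I * (p.2 : ℂ))

open Real
open scoped NNReal ENNReal


lemma my_integral_pow_mul_exp_neg_mul_sq {b : ℝ} (hb : 0 < b) (k : ℕ) :
    ∫ x : ℝ, x ^ (2 * k) * Real.exp (-b * x ^ 2)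
      = b ^ (-(2 * (k : ℝ) + 1) / 2) * Real.Gamma ((2 * (k : ℝ) + 1) / 2) := by
  have h1 : ∫ x : ℝ, x ^ (2 * k) * Real.exp (-b * x ^ 2)
      = 2 * ∫ x in Set.Ioi (0:ℝ), x ^ (2 * k) * Real.exp (-b * x ^ 2) := by
    rw [← integral_comp_abs (f := fun x => x ^ (2 * k) * Real.exp (-b * x ^ 2))]
    congr 1; funext x
    rw [Even.pow_abs ⟨k, by ring⟩, sq_abs]
  have hq : (-1 : ℝ) < 2 * (k : ℝ) := by
    have : (0:ℝ) ≤ 2 * (k:ℝ) := by positivity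
    linarith
  have h2 := integral_rpow_mul_exp_neg_mul_rpow (p := 2) (q := 2 * (k:ℝ)) (b := b)
    two_pos hq hb
  have h3 : Set.EqOn (fun x : ℝ => x ^ (2 * (k:ℝ)) * Real.exp (-b * x ^ (2:ℝ)))
      (fun x : ℝ => x ^ (2 * k) * Real.exp (-b * x ^ 2)) (Set.Ioi 0) := by
    intro x _
    simp only
    rw [show (2 * (k:ℝ)) = ((2*k : ℕ) : ℝ) by push_cast; ring, Real.rpow_natCast,
      show ((2:ℝ)) = ((2:ℕ) : ℝ) by norm_num, Real.rpow_natCast]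
  rw [h1, ← setIntegral_congr_fun measurableSet_Ioi h3, h2]
  ring

lemma my_gamma32 : Real.Gamma (3/2) = Real.sqrt π / 2 := by
  rw [show (3/2 : ℝ) = 1/2 + 1 by norm_num, Real.Gamma_add_one (by norm_num),
    Real.Gamma_one_half_eq]
  ring

lemma my_gamma52 : Real.Gamma (5/2) = 3 * Real.sqrt π / 4 := by
  rw [show (5/2 : ℝ) = 3/2 + 1 by norm_num, Real.Gamma_add_one (by norm_num), my_gamma32]
  ring

lemma my_pdf_eq (v : ℝ≥0) (x : ℝ) :
    gaussianPDFReal 0 v x = (√(2 * π * v))⁻¹ * Real.exp (-(2 * (v:ℝ))⁻¹ * x ^ 2) := by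
  rw [gaussianPDFReal]
  congr 1
  rw [sub_zero]
  ring

lemma my_pdf_moment_sq {v : ℝ≥0} (hv : v ≠ 0) :
    ∫ x : ℝ, gaussianPDFReal 0 v x * x ^ 2 = v := by
  have hv' : 0 < (v:ℝ) := by exact_mod_cast pos_iff_ne_zero.mpr hv
  have hb : 0 < (2 * (v:ℝ))⁻¹ := by positivity
  have heq : (fun x : ℝ => gaussianPDFReal 0 v x * x ^ 2)
      = fun x => (√(2 * π * v))⁻¹ * (x ^ (2 * 1) * Real.exp (-(2 * (v:ℝ))⁻¹ * x ^ 2)) := by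
    funext x; rw [my_pdf_eq]; ring
  rw [heq, integral_const_mul, my_integral_pow_mul_exp_neg_mul_sq hb 1]
  have e1 : ((2 * (v:ℝ))⁻¹) ^ (-(2 * ((1:ℕ):ℝ) + 1) / 2) = 2 * (v:ℝ) * √(2*(v:ℝ)) := by
    rw [← Real.rpow_neg_one, ← Real.rpow_mul (by positivity),
      show ((-1:ℝ) * (-(2 * ((1:ℕ):ℝ) + 1) / 2)) = 1 + 1/2 by push_cast; ring,
      Real.rpow_add (by positivity), Real.rpow_one, ← Real.sqrt_eq_rpow]
  have e2 : Real.Gamma ((2 * ((1:ℕ):ℝ) + 1) / 2) = √π / 2 := by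
    rw [show ((2 * ((1:ℕ):ℝ) + 1) / 2) = 3/2 by push_cast; ring]; exact my_gamma32
  rw [e1, e2, show 2 * π * (v:ℝ) = π * (2*(v:ℝ)) by ring, Real.sqrt_mul pi_pos.le]
  have s1 : 0 < √(2*(v:ℝ)) := Real.sqrt_pos.mpr (by positivity)
  have s2 : 0 < √π := Real.sqrt_pos.mpr pi_pos
  field_simp

lemma my_pdf_moment_four {v : ℝ≥0} (hv : v ≠ 0) :
    ∫ x : ℝ, gaussianPDFReal 0 v x * x ^ 4 = 3 * (v:ℝ) ^ 2 := by
  have hv' : 0 < (v:ℝ) := by exact_mod_cast pos_iff_ne_zero.mpr hv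
  have hb : 0 < (2 * (v:ℝ))⁻¹ := by positivity
  have heq : (fun x : ℝ => gaussianPDFReal 0 v x * x ^ 4)
      = fun x => (√(2 * π * v))⁻¹ * (x ^ (2 * 2) * Real.exp (-(2 * (v:ℝ))⁻¹ * x ^ 2)) := by
    funext x; rw [my_pdf_eq]; ring
  rw [heq, integral_const_mul, my_integral_pow_mul_exp_neg_mul_sq hb 2]
  have e1 : ((2 * (v:ℝ))⁻¹) ^ (-(2 * ((2:ℕ):ℝ) + 1) / 2) = (2 * (v:ℝ))^2 * √(2*(v:ℝ)) := by
    rw [← Real.rpow_neg_one, ← Real.rpow_mul (by positivity),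
      show ((-1:ℝ) * (-(2 * ((2:ℕ):ℝ) + 1) / 2)) = 2 + 1/2 by push_cast; ring,
      Real.rpow_add (by positivity), ← Real.sqrt_eq_rpow,
      show ((2:ℝ)) = ((2:ℕ):ℝ) by norm_num, Real.rpow_natCast]
  have e2 : Real.Gamma ((2 * ((2:ℕ):ℝ) + 1) / 2) = 3 * √π / 4 := by
    rw [show ((2 * ((2:ℕ):ℝ) + 1) / 2) = 5/2 by push_cast; ring]; exact my_gamma52
  rw [e1, e2, show 2 * π * (v:ℝ) = π * (2*(v:ℝ)) by ring, Real.sqrt_mul pi_pos.le]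
  have s1 : 0 < √(2*(v:ℝ)) := Real.sqrt_pos.mpr (by positivity)
  have s2 : 0 < √π := Real.sqrt_pos.mpr pi_pos
  field_simp
  ring

lemma my_integral_gaussianReal {v : ℝ≥0} (hv : v ≠ 0) (f : ℝ → ℝ) :
    ∫ x, f x ∂(gaussianReal 0 v) = ∫ x, gaussianPDFReal 0 v x * f x := by
  rw [gaussianReal_of_var_ne_zero _ hv]
  have h : gaussianPDF 0 v = fun x => (((gaussianPDFReal 0 v x).toNNReal : ℝ≥0) : ℝ≥0∞) :=
    rfl
  rw [h, integral_withDensity_eq_integral_smul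
    ((measurable_gaussianPDFReal 0 v).real_toNNReal)]
  congr 1
  funext x
  rw [NNReal.smul_def, Real.coe_toNNReal _ (gaussianPDFReal_nonneg 0 v x), smul_eq_mul]

lemma my_integrable_gaussianReal_iff {v : ℝ≥0} (hv : v ≠ 0) (f : ℝ → ℝ) :
    Integrable f (gaussianReal 0 v)
      ↔ Integrable (fun x => gaussianPDFReal 0 v x * f x) volume := by
  rw [gaussianReal_of_var_ne_zero _ hv]
  have h : gaussianPDF 0 v = fun x => (((gaussianPDFReal 0 v x).toNNReal : ℝ≥0) : ℝ≥0∞) :=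
    rfl
  rw [h]
  refine Iff.trans (integrable_withDensity_iff_integrable_smul (g := f)
    ((measurable_gaussianPDFReal 0 v).real_toNNReal)) ?_
  apply integrable_congr
  apply ae_of_all
  intro x
  simp only [NNReal.smul_def, Real.coe_toNNReal _ (gaussianPDFReal_nonneg 0 v x), smul_eq_mul]

lemma my_integrable_pow_gaussianReal {v : ℝ≥0} (hv : v ≠ 0) (k : ℕ) :
    Integrable (fun x : ℝ => x ^ k) (gaussianReal 0 v) := by
  have hv' : 0 < (v:ℝ) := by exact_mod_cast pos_iff_ne_zero.mpr hv
  have hb : 0 < (2 * (v:ℝ))⁻¹ := by positivity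
  rw [my_integrable_gaussianReal_iff hv]
  have base : Integrable (fun x : ℝ => x ^ ((k:ℕ):ℝ) * Real.exp (-(2*(v:ℝ))⁻¹ * x ^ 2)) :=
    integrable_rpow_mul_exp_neg_mul_sq hb (by
      have : (0:ℝ) ≤ (k:ℝ) := by positivity
      linarith)
  simp only [Real.rpow_natCast] at base
  apply (base.const_mul ((√(2 * π * v))⁻¹)).congr
  apply ae_of_all
  intro x
  simp only [my_pdf_eq]
  ring

lemma my_moment_sq_gaussianReal {v : ℝ≥0} (hv : v ≠ 0) :
    ∫ x, x ^ 2 ∂(gaussianReal 0 v) = (v:ℝ) := by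
  rw [my_integral_gaussianReal hv]; exact my_pdf_moment_sq hv

lemma my_moment_four_gaussianReal {v : ℝ≥0} (hv : v ≠ 0) :
    ∫ x, x ^ 4 ∂(gaussianReal 0 v) = 3 * (v:ℝ) ^ 2 := by
  rw [my_integral_gaussianReal hv]; exact my_pdf_moment_four hv

lemma my_measurable_phi : Measurable (fun p : ℝ × ℝ => (p.1 : ℂ) + Complex.I * (p.2 : ℂ)) :=
  (Complex.measurable_ofReal.comp measurable_fst).add
    ((Complex.measurable_ofReal.comp measurable_snd).const_mul _)

lemma my_normSq_phi (q : ℝ × ℝ) :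
    Complex.normSq ((q.1 : ℂ) + Complex.I * (q.2 : ℂ)) = q.1 ^ 2 + q.2 ^ 2 := by
  rw [mul_comm, Complex.normSq_add_mul_I]

instance my_isProb (β : ℝ) : IsProbabilityMeasure (complexGaussian β) := by
  rw [complexGaussian]
  exact Measure.isProbabilityMeasure_map my_measurable_phi.aemeasurable

section CG
variable {β : ℝ} (hβ : 0 < β)
include hβ

lemma my_w_ne : ((β/2).toNNReal) ≠ 0 := by
  simp only [ne_eq, Real.toNNReal_eq_zero, not_le]
  linarith

lemma my_w_coe : (((β/2).toNNReal : ℝ≥0) : ℝ) = β / 2 :=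
  Real.coe_toNNReal _ (by linarith)

lemma my_integrable_normSq : Integrable Complex.normSq (complexGaussian β) := by
  rw [complexGaussian, integrable_map_measure
    Complex.continuous_normSq.aestronglyMeasurable my_measurable_phi.aemeasurable]
  have h1 : Integrable (fun q : ℝ × ℝ => q.1 ^ 2)
      ((gaussianReal 0 (β/2).toNNReal).prod (gaussianReal 0 (β/2).toNNReal)) := by
    simpa using (my_integrable_pow_gaussianReal (my_w_ne hβ) 2).mul_prod
      (integrable_const (1:ℝ))
  have h2 : Integrable (fun q : ℝ × ℝ => q.2 ^ 2)
      ((gaussianReal 0 (β/2).toNNReal).prod (gaussianReal 0 (β/2).toNNReal)) := by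
    simpa using (integrable_const (1:ℝ)).mul_prod
      (my_integrable_pow_gaussianReal (my_w_ne hβ) 2)
  apply (h1.add h2).congr
  apply ae_of_all
  intro q
  exact (my_normSq_phi q).symm

lemma my_integral_normSq : ∫ z, Complex.normSq z ∂(complexGaussian β) = β := by
  rw [complexGaussian, integral_map my_measurable_phi.aemeasurable
    Complex.continuous_normSq.aestronglyMeasurable]
  simp only [my_normSq_phi]
  have h1 : Integrable (fun q : ℝ × ℝ => q.1 ^ 2)
      ((gaussianReal 0 (β/2).toNNReal).prod (gaussianReal 0 (β/2).toNNReal)) := by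
    simpa using (my_integrable_pow_gaussianReal (my_w_ne hβ) 2).mul_prod
      (integrable_const (1:ℝ))
  have h2 : Integrable (fun q : ℝ × ℝ => q.2 ^ 2)
      ((gaussianReal 0 (β/2).toNNReal).prod (gaussianReal 0 (β/2).toNNReal)) := by
    simpa using (integrable_const (1:ℝ)).mul_prod
      (my_integrable_pow_gaussianReal (my_w_ne hβ) 2)
  rw [integral_add h1 h2]
  have e1 : ∫ q : ℝ × ℝ, q.1 ^ 2
      ∂((gaussianReal 0 (β/2).toNNReal).prod (gaussianReal 0 (β/2).toNNReal)) = β/2 := by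
    have := integral_prod_mul (μ := gaussianReal 0 (β/2).toNNReal)
      (ν := gaussianReal 0 (β/2).toNNReal) (f := fun x => x ^ 2) (g := fun _ => (1:ℝ))
    simpa [my_moment_sq_gaussianReal (my_w_ne hβ), my_w_coe hβ] using this
  have e2 : ∫ q : ℝ × ℝ, q.2 ^ 2
      ∂((gaussianReal 0 (β/2).toNNReal).prod (gaussianReal 0 (β/2).toNNReal)) = β/2 := by
    have := integral_prod_mul (μ := gaussianReal 0 (β/2).toNNReal)
      (ν := gaussianReal 0 (β/2).toNNReal) (f := fun _ => (1:ℝ)) (g := fun x => x ^ 2)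
    simpa [my_moment_sq_gaussianReal (my_w_ne hβ), my_w_coe hβ] using this
  rw [e1, e2]
  ring

end CG

section CG2
variable {β : ℝ} (hβ : 0 < β)
include hβ

lemma my_integrable_normSq_sq :
    Integrable (fun z => Complex.normSq z ^ 2) (complexGaussian β) := by
  rw [complexGaussian, integrable_map_measure
    (show Continuous (fun z : ℂ => Complex.normSq z ^ 2) from
      Complex.continuous_normSq.pow 2).aestronglyMeasurable my_measurable_phi.aemeasurable]
  have hA : Integrable (fun q : ℝ × ℝ => q.1 ^ 4)
      ((gaussianReal 0 (β/2).toNNReal).prod (gaussianReal 0 (β/2).toNNReal)) := by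
    simpa using (my_integrable_pow_gaussianReal (my_w_ne hβ) 4).mul_prod
      (integrable_const (1:ℝ))
  have hB : Integrable (fun q : ℝ × ℝ => q.1 ^ 2 * q.2 ^ 2)
      ((gaussianReal 0 (β/2).toNNReal).prod (gaussianReal 0 (β/2).toNNReal)) :=
    (my_integrable_pow_gaussianReal (my_w_ne hβ) 2).mul_prod
      (my_integrable_pow_gaussianReal (my_w_ne hβ) 2)
  have hC : Integrable (fun q : ℝ × ℝ => q.2 ^ 4)
      ((gaussianReal 0 (β/2).toNNReal).prod (gaussianReal 0 (β/2).toNNReal)) := by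
    simpa using (integrable_const (1:ℝ)).mul_prod
      (my_integrable_pow_gaussianReal (my_w_ne hβ) 4)
  apply (hA.add ((hB.const_mul 2).add hC)).congr
  apply ae_of_all
  intro q
  simp only [Function.comp_apply, Pi.add_apply, my_normSq_phi]
  ring

lemma my_integral_normSq_sq :
    ∫ z, Complex.normSq z ^ 2 ∂(complexGaussian β) = 2 * β ^ 2 := by
  rw [complexGaussian, integral_map my_measurable_phi.aemeasurable
    (show Continuous (fun z : ℂ => Complex.normSq z ^ 2) from
      Complex.continuous_normSq.pow 2).aestronglyMeasurable]
  simp only [my_normSq_phi]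
  have hA : Integrable (fun q : ℝ × ℝ => q.1 ^ 4)
      ((gaussianReal 0 (β/2).toNNReal).prod (gaussianReal 0 (β/2).toNNReal)) := by
    simpa using (my_integrable_pow_gaussianReal (my_w_ne hβ) 4).mul_prod
      (integrable_const (1:ℝ))
  have hB : Integrable (fun q : ℝ × ℝ => q.1 ^ 2 * q.2 ^ 2)
      ((gaussianReal 0 (β/2).toNNReal).prod (gaussianReal 0 (β/2).toNNReal)) :=
    (my_integrable_pow_gaussianReal (my_w_ne hβ) 2).mul_prod
      (my_integrable_pow_gaussianReal (my_w_ne hβ) 2)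
  have hC : Integrable (fun q : ℝ × ℝ => q.2 ^ 4)
      ((gaussianReal 0 (β/2).toNNReal).prod (gaussianReal 0 (β/2).toNNReal)) := by
    simpa using (integrable_const (1:ℝ)).mul_prod
      (my_integrable_pow_gaussianReal (my_w_ne hβ) 4)
  have hsplit : ∫ q : ℝ × ℝ, (q.1 ^ 2 + q.2 ^ 2) ^ 2
      ∂((gaussianReal 0 (β/2).toNNReal).prod (gaussianReal 0 (β/2).toNNReal))
      = ∫ q : ℝ × ℝ, (q.1 ^ 4 + (2 * (q.1 ^ 2 * q.2 ^ 2) + q.2 ^ 4))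
      ∂((gaussianReal 0 (β/2).toNNReal).prod (gaussianReal 0 (β/2).toNNReal)) := by
    congr 1; funext q; ring
  have hBC : Integrable (fun q : ℝ × ℝ => 2 * (q.1 ^ 2 * q.2 ^ 2) + q.2 ^ 4)
      ((gaussianReal 0 (β/2).toNNReal).prod (gaussianReal 0 (β/2).toNNReal)) :=
    (hB.const_mul 2).add hC
  rw [hsplit, integral_add hA hBC, integral_add (hB.const_mul 2) hC, integral_const_mul]
  have eA : ∫ q : ℝ × ℝ, q.1 ^ 4
      ∂((gaussianReal 0 (β/2).toNNReal).prod (gaussianReal 0 (β/2).toNNReal))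
      = 3 * (β/2) ^ 2 := by
    have := integral_prod_mul (μ := gaussianReal 0 (β/2).toNNReal)
      (ν := gaussianReal 0 (β/2).toNNReal) (f := fun x => x ^ 4) (g := fun _ => (1:ℝ))
    simpa [my_moment_four_gaussianReal (my_w_ne hβ), my_w_coe hβ] using this
  have eC : ∫ q : ℝ × ℝ, q.2 ^ 4
      ∂((gaussianReal 0 (β/2).toNNReal).prod (gaussianReal 0 (β/2).toNNReal))
      = 3 * (β/2) ^ 2 := by
    have := integral_prod_mul (μ := gaussianReal 0 (β/2).toNNReal)
      (ν := gaussianReal 0 (β/2).toNNReal) (f := fun _ => (1:ℝ)) (g := fun x => x ^ 4)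
    simpa [my_moment_four_gaussianReal (my_w_ne hβ), my_w_coe hβ] using this
  have eB : ∫ q : ℝ × ℝ, q.1 ^ 2 * q.2 ^ 2
      ∂((gaussianReal 0 (β/2).toNNReal).prod (gaussianReal 0 (β/2).toNNReal))
      = (β/2) * (β/2) := by
    have := integral_prod_mul (μ := gaussianReal 0 (β/2).toNNReal)
      (ν := gaussianReal 0 (β/2).toNNReal) (f := fun x => x ^ 2) (g := fun x => x ^ 2)
    simpa [my_moment_sq_gaussianReal (my_w_ne hβ), my_w_coe hβ] using this
  rw [eA, eB, eC]
  ring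

end CG2

set_option maxHeartbeats 1000000 in
/-- For an `M × K` random matrix `G` with independent entries,
entry `(m, n)` distributed `CN(0, βₙ)`, and `P = diag(p₁, …, p_K)`,
`E[gₙᴴ · diag(G P Gᴴ) · gₙ] = M βₙ (∑ᵢ pᵢ βᵢ + pₙ βₙ)` for every column `gₙ` of `G`. -/
theorem diag_quadratic_form_expectation_diagonal
    {Ω : Type*} [MeasurableSpace Ω] (μ : Measure Ω) [IsProbabilityMeasure μ]
    (M K : ℕ) (hM : 1 ≤ M) (hK : 1 ≤ K)
    (β : Fin K → ℝ) (hβ : ∀ n, 0 < β n) (p : Fin K → ℝ) (hp : ∀ n, 0 ≤ p n)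
    (G : Ω → Matrix (Fin M) (Fin K) ℂ)
    (h_indep : iIndepFun
      (fun (q : Fin M × Fin K) ω => G ω q.1 q.2) μ)
    (h_dist : ∀ m n, μ.map (fun ω => G ω m n) = complexGaussian (β n))
    (n : Fin K) :
    ∫ ω, star (fun m => G ω m n) ⬝ᵥ
        ((Matrix.diagonal fun m =>
            (G ω * Matrix.diagonal (fun i => (p i : ℂ)) * (G ω)ᴴ) m m)
          *ᵥ (fun m => G ω m n)) ∂μ
      = (M : ℂ) * β n * ((∑ i, p i * β i) + p n * β n) := by
  -- a.e.-measurability of each entry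
  have hAE : ∀ m i, AEMeasurable (fun ω => G ω m i) μ := by
    intro m i
    by_contra h
    have h0 := Measure.map_of_not_aemeasurable h
    rw [h_dist m i] at h0
    have h1 := (my_isProb (β i)).measure_univ
    rw [h0] at h1
    simp at h1
  -- second moments
  have hX2int : ∀ m i, Integrable (fun ω => Complex.normSq (G ω m i)) μ := by
    intro m i
    have h := my_integrable_normSq (hβ i)
    rw [← h_dist m i] at h
    exact (integrable_map_measure Complex.continuous_normSq.aestronglyMeasurable
      (hAE m i)).mp h
  have hX2val : ∀ m i, ∫ ω, Complex.normSq (G ω m i) ∂μ = β i := by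
    intro m i
    calc ∫ ω, Complex.normSq (G ω m i) ∂μ
        = ∫ z, Complex.normSq z ∂(μ.map (fun ω => G ω m i)) :=
          (integral_map (hAE m i)
            Complex.continuous_normSq.aestronglyMeasurable).symm
      _ = β i := by rw [h_dist m i]; exact my_integral_normSq (hβ i)
  -- fourth moments
  have hX4int : ∀ m i, Integrable (fun ω => Complex.normSq (G ω m i) ^ 2) μ := by
    intro m i
    have h := my_integrable_normSq_sq (hβ i)
    rw [← h_dist m i] at h
    exact (integrable_map_measure
      (Complex.continuous_normSq.pow 2).aestronglyMeasurable (hAE m i)).mp h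
  have hX4val : ∀ m i, ∫ ω, Complex.normSq (G ω m i) ^ 2 ∂μ = 2 * β i ^ 2 := by
    intro m i
    calc ∫ ω, Complex.normSq (G ω m i) ^ 2 ∂μ
        = ∫ z, Complex.normSq z ^ 2 ∂(μ.map (fun ω => G ω m i)) :=
          (integral_map (hAE m i)
            (Complex.continuous_normSq.pow 2).aestronglyMeasurable).symm
      _ = 2 * β i ^ 2 := by rw [h_dist m i]; exact my_integral_normSq_sq (hβ i)
  -- independence of distinct entries in the same row
  have hind : ∀ m, ∀ i, i ≠ n →
      IndepFun (fun ω => Complex.normSq (G ω m i))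
        (fun ω => Complex.normSq (G ω m n)) μ := by
    intro m i hi
    have h1 : ((m, i) : Fin M × Fin K) ≠ (m, n) := by
      intro hc
      exact hi (congrArg Prod.snd hc)
    exact (h_indep.indepFun h1).comp Complex.continuous_normSq.measurable
      Complex.continuous_normSq.measurable
  -- per-term expectation
  have hterm : ∀ (m : Fin M) (i : Fin K),
      ∫ ω, Complex.normSq (G ω m i) * Complex.normSq (G ω m n) ∂μ
        = β i * β n + (if i = n then β n * β n else 0) := by
    intro m i
    by_cases h : i = n
    · subst h
      have e : (fun ω => Complex.normSq (G ω m i) * Complex.normSq (G ω m i))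
          = fun ω => Complex.normSq (G ω m i) ^ 2 := by
        funext ω; ring
      rw [e, hX4val m i, if_pos rfl]
      ring
    · have h3 : ∫ ω, Complex.normSq (G ω m i) * Complex.normSq (G ω m n) ∂μ
          = (∫ ω, Complex.normSq (G ω m i) ∂μ) * ∫ ω, Complex.normSq (G ω m n) ∂μ :=
        (hind m i h).integral_fun_mul_eq_mul_integral (hX2int m i).aestronglyMeasurable
          (hX2int m n).aestronglyMeasurable
      rw [h3, hX2val m i, hX2val m n, if_neg h, add_zero]
  -- per-term integrability
  have htermInt : ∀ (m : Fin M) (i : Fin K),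
      Integrable (fun ω => p i * (Complex.normSq (G ω m i)
        * Complex.normSq (G ω m n))) μ := by
    intro m i
    by_cases h : i = n
    · subst h
      apply Integrable.const_mul
      apply (hX4int m i).congr
      apply ae_of_all
      intro ω
      ring
    · apply Integrable.const_mul
      exact (hind m i h).integrable_mul (hX2int m i) (hX2int m n)
  -- pointwise identification of the quadratic form with a real double sum
  have key : ∀ ω, (star (fun m => G ω m n) ⬝ᵥ
        ((Matrix.diagonal fun m =>
            (G ω * Matrix.diagonal (fun i => (p i : ℂ)) * (G ω)ᴴ) m m)
          *ᵥ (fun m => G ω m n)))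
      = (((∑ m : Fin M, ∑ i : Fin K, p i * (Complex.normSq (G ω m i)
          * Complex.normSq (G ω m n))) : ℝ) : ℂ) := by
    intro ω
    push_cast
    simp only [dotProduct, Pi.star_apply, Matrix.mulVec_diagonal,
      Matrix.mul_apply, Matrix.diagonal_apply, Matrix.conjTranspose_apply,
      RCLike.star_def, Complex.normSq_eq_conj_mul_self, mul_ite, ite_mul,
      mul_zero, zero_mul, Finset.sum_ite_eq, Finset.sum_ite_eq',
      Finset.mem_univ, if_true]
    refine Finset.sum_congr rfl fun m _ => ?_
    rw [Finset.sum_mul, Finset.mul_sum]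
    refine Finset.sum_congr rfl fun i _ => ?_
    ring
  -- compute the real integral
  have hReal : ∫ ω, (∑ m : Fin M, ∑ i : Fin K, p i * (Complex.normSq (G ω m i)
        * Complex.normSq (G ω m n))) ∂μ
      = (M : ℝ) * (β n * (∑ i, p i * β i) + p n * (β n * β n)) := by
    rw [integral_finset_sum _ (fun m _ => integrable_finset_sum _ (fun i _ => htermInt m i))]
    have hrow : ∀ m ∈ Finset.univ, (∫ ω, ∑ i : Fin K, p i * (Complex.normSq (G ω m i)
        * Complex.normSq (G ω m n)) ∂μ)
        = β n * (∑ i, p i * β i) + p n * (β n * β n) := by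
      intro m _
      rw [integral_finset_sum _ (fun i _ => htermInt m i)]
      have e : ∀ i ∈ Finset.univ, (∫ ω, p i * (Complex.normSq (G ω m i)
          * Complex.normSq (G ω m n)) ∂μ)
          = p i * (β i * β n) + (if i = n then p i * (β n * β n) else 0) := by
        intro i _
        rw [integral_const_mul, hterm m i]
        by_cases h : i = n <;> simp [h] <;> ring
      rw [Finset.sum_congr rfl e, Finset.sum_add_distrib,
        Finset.sum_ite_eq' Finset.univ n (fun i => p i * (β n * β n))]
      simp only [Finset.mem_univ, if_pos]
      rw [Finset.mul_sum]
      congr 1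
      refine Finset.sum_congr rfl fun i _ => by ring
    rw [Finset.sum_congr rfl hrow, Finset.sum_const, Finset.card_univ,
      Fintype.card_fin, nsmul_eq_mul]
  calc ∫ ω, star (fun m => G ω m n) ⬝ᵥ
        ((Matrix.diagonal fun m =>
            (G ω * Matrix.diagonal (fun i => (p i : ℂ)) * (G ω)ᴴ) m m)
          *ᵥ (fun m => G ω m n)) ∂μ
      = ∫ ω, (((∑ m : Fin M, ∑ i : Fin K, p i * (Complex.normSq (G ω m i)
          * Complex.normSq (G ω m n))) : ℝ) : ℂ) ∂μ :=
        integral_congr_ae (Filter.Eventually.of_forall key)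
    _ = (((∫ ω, (∑ m : Fin M, ∑ i : Fin K, p i * (Complex.normSq (G ω m i)
          * Complex.normSq (G ω m n))) ∂μ) : ℝ) : ℂ) := integral_ofReal
    _ = (M : ℂ) * β n * ((∑ i, p i * β i) + p n * β n) := by
        rw [hReal]
        push_cast
        ring
end

section
/- Fix an integer K ≥ 1, positive reals β_SR,1,…,β_SR,K and β_RD,1,…,β_RD,K, E_R > 0, k ∈ {1,…,K}, and t ∈ (0,1]. For E_S > 0 define ν(E_S) = E_S E_R t² / [ E_S t X + Y + E_R t Z ] and ν_p(E_S) = E_S E_R / [ E_S X + Y + E_R Z ], where X = ∑_{i=1}^K β_SR,i² β_RD,i/(β_SR,k² β_RD,k²), Y = (∑_{m=1}^K β_SR,m β_RD,m)/(β_SR,k² β_RD,k²), and Z = 1/β_SR,k. Then lim_{E_S → 0⁺} log(1+ν(E_S)) / log(1+ν_p(E_S)) = t² ( E_R β_SR,k β_RD,k² + ∑_{m=1}^K β_SR,m β_RD,m ) / ( t E_R β_SR,k β_RD,k² + ∑_{m=1}^K β_SR,m β_RD,m ). -/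
open Filter

/-- **Proposition 1.** With `t = α + ρκ ∈ (0,1]`,
`ν(E_S) = E_S E_R t²/(E_S t X + Y + E_R t Z)` the asymptotic SINR of the
mixed-ADC/DAC system and `ν_p(E_S) = E_S E_R/(E_S X + Y + E_R Z)` that of the ideal
unquantized system, where `X = ∑ᵢ β_SR,i² β_RD,i/(β_SR,k² β_RD,k²)`,
`Y = (∑ₘ β_SR,m β_RD,m)/(β_SR,k² β_RD,k²)` and `Z = 1/β_SR,k`, the rate ratio
satisfies, as `E_S → 0⁺`,
`log(1+ν)/log(1+ν_p) → t² (E_R β_SR,k β_RD,k² + ∑ₘ β_SR,m β_RD,m)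
  / (t E_R β_SR,k β_RD,k² + ∑ₘ β_SR,m β_RD,m)`. -/
theorem rate_ratio_low_source_power (K : ℕ) (hK : 1 ≤ K)
    (βSR βRD : Fin K → ℝ) (hβSR : ∀ j, 0 < βSR j) (hβRD : ∀ j, 0 < βRD j)
    (ER : ℝ) (hER : 0 < ER) (k : Fin K) (t : ℝ) (ht : t ∈ Set.Ioc (0 : ℝ) 1) :
    Tendsto (fun ES : ℝ =>
        Real.log (1 + ES * ER * t ^ 2 /
            (ES * t * (∑ i, βSR i ^ 2 * βRD i / (βSR k ^ 2 * βRD k ^ 2))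
              + (∑ m, βSR m * βRD m) / (βSR k ^ 2 * βRD k ^ 2)
              + ER * t * (1 / βSR k))) /
          Real.log (1 + ES * ER /
            (ES * (∑ i, βSR i ^ 2 * βRD i / (βSR k ^ 2 * βRD k ^ 2))
              + (∑ m, βSR m * βRD m) / (βSR k ^ 2 * βRD k ^ 2)
              + ER * (1 / βSR k))))
      (nhdsWithin 0 (Set.Ioi 0))
      (nhds (t ^ 2 * (ER * βSR k * βRD k ^ 2 + ∑ m, βSR m * βRD m) /
        (t * ER * βSR k * βRD k ^ 2 + ∑ m, βSR m * βRD m))) := by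
  obtain ⟨ht0, ht1⟩ := ht
  have hβk := hβSR k
  have hγk := hβRD k
  set X : ℝ := ∑ i, βSR i ^ 2 * βRD i / (βSR k ^ 2 * βRD k ^ 2) with hXdef
  set S : ℝ := ∑ m, βSR m * βRD m with hSdef
  set Y : ℝ := S / (βSR k ^ 2 * βRD k ^ 2) with hYdef
  set Z : ℝ := 1 / βSR k with hZdef
  have hXpos : 0 < X :=
    Finset.sum_pos (fun i _ => div_pos (mul_pos (pow_pos (hβSR i) 2) (hβRD i))
      (mul_pos (pow_pos hβk 2) (pow_pos hγk 2))) ⟨k, Finset.mem_univ k⟩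
  have hSpos : 0 < S :=
    Finset.sum_pos (fun m _ => mul_pos (hβSR m) (hβRD m)) ⟨k, Finset.mem_univ k⟩
  have hYpos : 0 < Y := div_pos hSpos (mul_pos (pow_pos hβk 2) (pow_pos hγk 2))
  have hZpos : 0 < Z := by positivity
  -- denominators
  have hDt : ∀ s : ℝ, 0 ≤ s → 0 < s * t * X + Y + ER * t * Z := fun s hs => by
    have : 0 ≤ s * t * X := by positivity
    have : 0 < ER * t * Z := by positivity
    linarith
  have hD1 : ∀ s : ℝ, 0 ≤ s → 0 < s * X + Y + ER * Z := fun s hs => by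
    have : 0 ≤ s * X := by positivity
    have : 0 < ER * Z := by positivity
    linarith
  set f : ℝ → ℝ := fun s => s * ER * t ^ 2 / (s * t * X + Y + ER * t * Z) with hfdef
  set g : ℝ → ℝ := fun s => s * ER / (s * X + Y + ER * Z) with hgdef
  have hfpos : ∀ s : ℝ, 0 < s → 0 < f s := fun s hs =>
    div_pos (by positivity) (hDt s hs.le)
  have hgpos : ∀ s : ℝ, 0 < s → 0 < g s := fun s hs =>
    div_pos (by positivity) (hD1 s hs.le)
  -- log(1+x)/x → 1
  have hlog : Tendsto (fun x : ℝ => Real.log (1 + x) / x)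
      (nhdsWithin 0 (Set.Ioi 0)) (nhds 1) := by
    have h : HasDerivAt (fun x : ℝ => Real.log (1 + x)) 1 0 := by
      have h1 := (Real.hasDerivAt_log (by norm_num : (1:ℝ) + 0 ≠ 0)).comp 0
        ((hasDerivAt_id (0:ℝ)).const_add 1)
      simpa [Function.comp_def] using h1
    have h2 := hasDerivAt_iff_tendsto_slope.mp h
    have h3 : Tendsto (fun x : ℝ => Real.log (1 + x) / x)
        (nhdsWithin 0 {(0:ℝ)}ᶜ) (nhds 1) := by
      refine h2.congr' ?_
      filter_upwards [self_mem_nhdsWithin] with x hx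
      simp [slope_def_field]
    exact h3.mono_left (nhdsWithin_mono _ (fun x hx => ne_of_gt hx))
  -- f, g → 0 within Ioi 0
  have hcf : Tendsto f (nhdsWithin 0 (Set.Ioi 0)) (nhds 0) := by
    have hc : ContinuousAt f 0 := by
      apply ContinuousAt.div
      · fun_prop
      · fun_prop
      · simpa using (hDt 0 le_rfl).ne'
    have : f 0 = 0 := by simp [hfdef]
    simpa [this] using hc.continuousWithinAt.tendsto
  have hcg : Tendsto g (nhdsWithin 0 (Set.Ioi 0)) (nhds 0) := by
    have hc : ContinuousAt g 0 := by
      apply ContinuousAt.div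
      · fun_prop
      · fun_prop
      · simpa using (hD1 0 le_rfl).ne'
    have : g 0 = 0 := by simp [hgdef]
    simpa [this] using hc.continuousWithinAt.tendsto
  have hfI : Tendsto f (nhdsWithin 0 (Set.Ioi 0)) (nhdsWithin 0 (Set.Ioi 0)) := by
    rw [tendsto_nhdsWithin_iff]
    exact ⟨hcf, eventually_nhdsWithin_of_forall (fun s hs => hfpos s hs)⟩
  have hgI : Tendsto g (nhdsWithin 0 (Set.Ioi 0)) (nhdsWithin 0 (Set.Ioi 0)) := by
    rw [tendsto_nhdsWithin_iff]
    exact ⟨hcg, eventually_nhdsWithin_of_forall (fun s hs => hgpos s hs)⟩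
  have hA : Tendsto (fun s => Real.log (1 + f s) / f s)
      (nhdsWithin 0 (Set.Ioi 0)) (nhds 1) := hlog.comp hfI
  have hB : Tendsto (fun s => g s / Real.log (1 + g s))
      (nhdsWithin 0 (Set.Ioi 0)) (nhds 1) := by
    have := (hlog.comp hgI).inv₀ one_ne_zero
    simpa using this
  -- f/g → L
  have hL : Tendsto (fun s => f s / g s) (nhdsWithin 0 (Set.Ioi 0))
      (nhds (t ^ 2 * (ER * βSR k * βRD k ^ 2 + S) /
        (t * ER * βSR k * βRD k ^ 2 + S))) := by
    have hφ : Tendsto (fun s : ℝ => t ^ 2 * (s * X + Y + ER * Z) / (s * t * X + Y + ER * t * Z))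
        (nhdsWithin 0 (Set.Ioi 0))
        (nhds (t ^ 2 * (Y + ER * Z) / (Y + ER * t * Z))) := by
      have hc : ContinuousAt (fun s : ℝ => t ^ 2 * (s * X + Y + ER * Z) / (s * t * X + Y + ER * t * Z)) 0 := by
        apply ContinuousAt.div
        · fun_prop
        · fun_prop
        · simpa using (hDt 0 le_rfl).ne'
      simpa using hc.continuousWithinAt.tendsto
    have heq : (t ^ 2 * (Y + ER * Z) / (Y + ER * t * Z)) =
        t ^ 2 * (ER * βSR k * βRD k ^ 2 + S) / (t * ER * βSR k * βRD k ^ 2 + S) := by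
      rw [hYdef, hZdef]
      have hden : (0:ℝ) < t * ER * βSR k * βRD k ^ 2 + S := by positivity
      field_simp
      ring
    rw [← heq]
    refine hφ.congr' ?_
    filter_upwards [self_mem_nhdsWithin] with s hs
    have hDt' := (hDt s (le_of_lt hs)).ne'
    have hD1' := (hD1 s (le_of_lt hs)).ne'
    have hs0 : (s : ℝ) ≠ 0 := ne_of_gt hs
    simp only [hfdef, hgdef]
    field_simp
  -- combine
  have hmain := (hA.mul hL).mul hB
  rw [one_mul, mul_one] at hmain
  refine hmain.congr' ?_
  filter_upwards [self_mem_nhdsWithin] with s hs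
  have hf' := hfpos s hs
  have hg' := hgpos s hs
  have hlogg : Real.log (1 + g s) ≠ 0 :=
    ne_of_gt (Real.log_pos (by linarith))
  field_simp
  exact (mul_div_cancel_left₀ _ hlogg).symm
end

section
/- Fix an integer K ≥ 1, positive reals β_SR,1,…,β_SR,K and β_RD,1,…,β_RD,K, E_S > 0, k ∈ {1,…,K}, and t ∈ (0,1]. For E_R > 0 define ν(E_R) = E_S E_R t² / [ E_S t X + Y + E_R t Z ] and ν_p(E_R) = E_S E_R / [ E_S X + Y + E_R Z ], where X = ∑_{i=1}^K β_SR,i² β_RD,i/(β_SR,k² β_RD,k²), Y = (∑_{m=1}^K β_SR,m β_RD,m)/(β_SR,k² β_RD,k²), and Z = 1/β_SR,k. Then lim_{E_R → 0⁺} log(1+ν(E_R)) / log(1+ν_p(E_R)) = t² ( E_S ∑_{m=1}^K β_SR,m² β_RD,m + ∑_{m=1}^K β_SR,m β_RD,m ) / ( t E_S ∑_{m=1}^K β_SR,m² β_RD,m + ∑_{m=1}^K β_SR,m β_RD,m ). -/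
open Filter

lemma aux_ratio_eq (a b f g : ℝ) (hf : f ≠ 0) (hg : g ≠ 0) (hb : b ≠ 0) :
    a / f * (f / g) / (b / g) = a / b := by
  field_simp

lemma aux_log_slope : Tendsto (fun x : ℝ => Real.log (1 + x) / x) (nhdsWithin 0 {(0:ℝ)}ᶜ) (nhds 1) := by
  have h : HasDerivAt (fun x : ℝ => Real.log (1 + x)) 1 0 := by
    have h1 : HasDerivAt (fun x : ℝ => 1 + x) 1 0 := by
      simpa using (hasDerivAt_id (0:ℝ)).const_add 1
    have h2 : HasDerivAt Real.log 1 ((1:ℝ) + 0) := by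
      simpa using Real.hasDerivAt_log (by norm_num : (1:ℝ)+0 ≠ 0)
    have h3 := h2.comp 0 h1
    rw [mul_one] at h3
    exact h3
  have := hasDerivAt_iff_tendsto_slope.mp h
  refine this.congr (fun x => ?_)
  simp [slope_def_field]

/-- **Proposition 2.** With `t = α + ρκ ∈ (0,1]`,
`ν(E_R) = E_S E_R t²/(E_S t X + Y + E_R t Z)` the asymptotic SINR of the
mixed-ADC/DAC system and `ν_p(E_R) = E_S E_R/(E_S X + Y + E_R Z)` that of the ideal
unquantized system, where `X = ∑ᵢ β_SR,i² β_RD,i/(β_SR,k² β_RD,k²)`,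
`Y = (∑ₘ β_SR,m β_RD,m)/(β_SR,k² β_RD,k²)` and `Z = 1/β_SR,k`, the rate ratio
satisfies, as `E_R → 0⁺`,
`log(1+ν)/log(1+ν_p) → t² (E_S ∑ₘ β_SR,m² β_RD,m + ∑ₘ β_SR,m β_RD,m)
  / (t E_S ∑ₘ β_SR,m² β_RD,m + ∑ₘ β_SR,m β_RD,m)`. -/
theorem rate_ratio_low_relay_power (K : ℕ) (hK : 1 ≤ K)
    (βSR βRD : Fin K → ℝ) (hβSR : ∀ j, 0 < βSR j) (hβRD : ∀ j, 0 < βRD j)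
    (ES : ℝ) (hES : 0 < ES) (k : Fin K) (t : ℝ) (ht : t ∈ Set.Ioc (0 : ℝ) 1) :
    Tendsto (fun ER : ℝ =>
        Real.log (1 + ES * ER * t ^ 2 /
            (ES * t * (∑ i, βSR i ^ 2 * βRD i / (βSR k ^ 2 * βRD k ^ 2))
              + (∑ m, βSR m * βRD m) / (βSR k ^ 2 * βRD k ^ 2)
              + ER * t * (1 / βSR k))) /
          Real.log (1 + ES * ER /
            (ES * (∑ i, βSR i ^ 2 * βRD i / (βSR k ^ 2 * βRD k ^ 2))
              + (∑ m, βSR m * βRD m) / (βSR k ^ 2 * βRD k ^ 2)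
              + ER * (1 / βSR k))))
      (nhdsWithin 0 (Set.Ioi 0))
      (nhds (t ^ 2 * (ES * (∑ m, βSR m ^ 2 * βRD m) + ∑ m, βSR m * βRD m) /
        (t * ES * (∑ m, βSR m ^ 2 * βRD m) + ∑ m, βSR m * βRD m))) := by
  obtain ⟨ht0, ht1⟩ := ht
  rw [← Finset.sum_div]
  set c := βSR k ^ 2 * βRD k ^ 2 with hc
  have hc0 : (0:ℝ) < c := by have := hβSR k; have := hβRD k; positivity
  set S1 := ∑ m, βSR m ^ 2 * βRD m with hS1
  set S2 := ∑ m, βSR m * βRD m with hS2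
  have hS1pos : 0 < S1 := Finset.sum_pos (fun i _ => by have := hβSR i; have := hβRD i; positivity) ⟨k, Finset.mem_univ k⟩
  have hS2pos : 0 < S2 := Finset.sum_pos (fun i _ => by have := hβSR i; have := hβRD i; positivity) ⟨k, Finset.mem_univ k⟩
  set X : ℝ := S1 / c with hXdef
  set Y : ℝ := S2 / c with hYdef
  set Z : ℝ := 1 / βSR k with hZdef
  have hX0 : 0 < X := div_pos hS1pos hc0
  have hY0 : 0 < Y := div_pos hS2pos hc0
  have hZ0 : 0 < Z := by have := hβSR k; positivity
  set f : ℝ → ℝ := fun ER => ES * ER * t ^ 2 / (ES * t * X + Y + ER * t * Z) with hfdef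
  set g : ℝ → ℝ := fun ER => ES * ER / (ES * X + Y + ER * Z) with hgdef
  have hdf : ∀ ER : ℝ, 0 < ER → 0 < ES * t * X + Y + ER * t * Z := fun ER h => by positivity
  have hdg : ∀ ER : ℝ, 0 < ER → 0 < ES * X + Y + ER * Z := fun ER h => by positivity
  have hfpos : ∀ ER ∈ Set.Ioi (0:ℝ), 0 < f ER := fun ER h => by
    have h' : 0 < ER := h
    exact div_pos (by positivity) (hdf ER h')
  have hgpos : ∀ ER ∈ Set.Ioi (0:ℝ), 0 < g ER := fun ER h => by
    have h' : 0 < ER := h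
    exact div_pos (by positivity) (hdg ER h')
  -- f and g tend to 0 within the punctured nbhd of 0
  have hfc : ContinuousAt f 0 := by
    apply ContinuousAt.div (by fun_prop) (by fun_prop)
    simp only [zero_mul, mul_zero, zero_add, add_zero]
    nlinarith [mul_pos (mul_pos hES ht0) hX0]
  have hgc : ContinuousAt g 0 := by
    apply ContinuousAt.div (by fun_prop) (by fun_prop)
    simp only [zero_mul, mul_zero, zero_add, add_zero]
    nlinarith [mul_pos hES hX0]
  have hf0 : f 0 = 0 := by simp [hfdef]
  have hg0 : g 0 = 0 := by simp [hgdef]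
  have hfT : Tendsto f (nhdsWithin 0 (Set.Ioi 0)) (nhdsWithin 0 {(0:ℝ)}ᶜ) := by
    rw [tendsto_nhdsWithin_iff]
    constructor
    · exact (hf0 ▸ hfc.tendsto).mono_left nhdsWithin_le_nhds
    · exact eventually_mem_nhdsWithin.mono (fun ER h => (hfpos ER h).ne')
  have hgT : Tendsto g (nhdsWithin 0 (Set.Ioi 0)) (nhdsWithin 0 {(0:ℝ)}ᶜ) := by
    rw [tendsto_nhdsWithin_iff]
    constructor
    · exact (hg0 ▸ hgc.tendsto).mono_left nhdsWithin_le_nhds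
    · exact eventually_mem_nhdsWithin.mono (fun ER h => (hgpos ER h).ne')
  have T1 : Tendsto (fun ER => Real.log (1 + f ER) / f ER) (nhdsWithin 0 (Set.Ioi 0)) (nhds 1) :=
    aux_log_slope.comp hfT
  have T2 : Tendsto (fun ER => Real.log (1 + g ER) / g ER) (nhdsWithin 0 (Set.Ioi 0)) (nhds 1) :=
    aux_log_slope.comp hgT
  -- the ratio f/g
  set L : ℝ := t ^ 2 * (ES * S1 + S2) / (t * ES * S1 + S2) with hLdef
  have hr : Tendsto (fun ER : ℝ => t ^ 2 * (ES * X + Y + ER * Z) / (ES * t * X + Y + ER * t * Z))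
      (nhdsWithin 0 (Set.Ioi 0)) (nhds L) := by
    have hcont : ContinuousAt (fun ER : ℝ => t ^ 2 * (ES * X + Y + ER * Z) / (ES * t * X + Y + ER * t * Z)) 0 := by
      apply ContinuousAt.div (by fun_prop) (by fun_prop)
      simp only [zero_mul, add_zero]
      nlinarith [mul_pos (mul_pos hES ht0) hX0]
    have hval : t ^ 2 * (ES * X + Y + 0 * Z) / (ES * t * X + Y + 0 * t * Z) = L := by
      rw [hLdef, hXdef, hYdef]
      field_simp
      ring_nf
    have := hcont.tendsto.mono_left (nhdsWithin_le_nhds (s := Set.Ioi (0:ℝ)))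
    simpa only [hval] using this
  have T3 : Tendsto (fun ER => f ER / g ER) (nhdsWithin 0 (Set.Ioi 0)) (nhds L) := by
    refine hr.congr' ?_
    filter_upwards [eventually_mem_nhdsWithin] with ER hER
    have hER' : (0:ℝ) < ER := hER
    have hd1 := (hdf ER hER').ne'
    have hd2 := (hdg ER hER').ne'
    show _ = ES * ER * t ^ 2 / (ES * t * X + Y + ER * t * Z) / (ES * ER / (ES * X + Y + ER * Z))
    rw [div_div_div_comm]
    rw [div_div_eq_mul_div, div_mul_eq_mul_div]
    field_simp
  -- combine
  have Tall := (T1.mul T3).div T2 one_ne_zero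
  have hlim : (1 * L) / 1 = L := by ring
  rw [hlim] at Tall
  have Teq : Tendsto (fun ER => Real.log (1 + f ER) / Real.log (1 + g ER))
      (nhdsWithin 0 (Set.Ioi 0)) (nhds L) := by
    refine Tall.congr' ?_
    filter_upwards [eventually_mem_nhdsWithin] with ER hER
    have hfp := hfpos ER hER
    have hgp := hgpos ER hER
    have hLg : 0 < Real.log (1 + g ER) := Real.log_pos (by linarith)
    exact aux_ratio_eq _ _ _ _ hfp.ne' hgp.ne' hLg.ne'
  have hLeq : L = t ^ 2 * (ES * S1 + S2) / (t * ES * S1 + S2) := rfl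
  exact Teq
end
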